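/- Let X be a fixed nonnegative random variable with E[X] > 0, and let (S_η) be a family of nonnegative random variables independent of X with parameter η, such that for every x > 0, P(S_η > x) → 0 and E[S_η·1{S_η ≤ x}] → 0 as η → η*. Then P(S_η < X) → 1, E[S_η·1{S_η < X}] → 0, and E[min(X, S_η)] → 0 as η → η*. Consequently the peak age E[X]/P(S_η<X) + E[S_η 1{S_η<X}]/P(S_η<X) converges to E[X], and the average age ½E[X²]/E[X] + E[min(X,S_η)]/P(S_η<X) converges to ½E[X²]/E[X]. -/

import Mathlib

open MeasureTheory ProbabilityTheory Set Filter Topology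

private lemma mul_ind_eq {Ω : Type*} (A : Set Ω) (f : Ω → ℝ) (ω : Ω) :
    f ω * A.indicator (fun _ => (1:ℝ)) ω = A.indicator f ω := by
  by_cases h : ω ∈ A <;> simp [Set.indicator_of_mem, Set.indicator_of_notMem, h]

/-- Sufficient conditions for a parametric service distribution `S_η` to achieve
the age lower bounds of the preemptive LCFS G/G/1 queue in the limit `η → η*`:
if `P(S_η > x) → 0` and `E[S_η 1{S_η ≤ x}] → 0` for every `x > 0`, then
`P(S_η < X) → 1`, `E[S_η 1{S_η < X}] → 0`, `E[min(X, S_η)] → 0`, the peak age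
converges to `E[X]` and the average age converges to `½E[X²]/E[X]`. -/
theorem LCFS_heavy_tail_achieves_bounds
    {Ω : Type*} [MeasureSpace Ω] [IsProbabilityMeasure (ℙ : Measure Ω)]
    {ι : Type*} (l : Filter ι)
    (X : Ω → ℝ) (S : ι → Ω → ℝ)
    (hXnn : ∀ᵐ ω ∂ℙ, 0 ≤ X ω) (hX0 : ℙ {ω | X ω = 0} = 0)
    (hXmeas : Measurable X)
    (hXint : Integrable X ℙ) (hX2int : Integrable (fun ω => (X ω) ^ 2) ℙ)
    (hEXpos : 0 < 𝔼[X])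
    (hSnn : ∀ η, ∀ᵐ ω ∂ℙ, 0 ≤ S η ω) (hSmeas : ∀ η, Measurable (S η))
    (hSint : ∀ η, Integrable (S η) ℙ)
    (hindep : ∀ η, IndepFun X (S η) ℙ)
    (htail : ∀ x : ℝ, 0 < x →
      Tendsto (fun η => (ℙ {ω | x < S η ω}).toReal) l (𝓝 0))
    (htrunc : ∀ x : ℝ, 0 < x →
      Tendsto (fun η =>
        𝔼[fun ω => S η ω * Set.indicator {ω' | S η ω' ≤ x} (fun _ => (1:ℝ)) ω]) l (𝓝 0)) :
    Tendsto (fun η => (ℙ {ω | S η ω < X ω}).toReal) l (𝓝 1) ∧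
    Tendsto (fun η =>
      𝔼[fun ω => S η ω * Set.indicator {ω' | S η ω' < X ω'} (fun _ => (1:ℝ)) ω]) l (𝓝 0) ∧
    Tendsto (fun η => 𝔼[fun ω => min (X ω) (S η ω)]) l (𝓝 0) ∧
    Tendsto (fun η =>
      𝔼[X] / (ℙ {ω | S η ω < X ω}).toReal +
        𝔼[fun ω => S η ω * Set.indicator {ω' | S η ω' < X ω'} (fun _ => (1:ℝ)) ω] /
          (ℙ {ω | S η ω < X ω}).toReal) l (𝓝 (𝔼[X])) ∧
    Tendsto (fun η =>
      (1 / 2) * 𝔼[fun ω => (X ω) ^ 2] / 𝔼[X] +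
        𝔼[fun ω => min (X ω) (S η ω)] / (ℙ {ω | S η ω < X ω}).toReal) l
      (𝓝 ((1 / 2) * 𝔼[fun ω => (X ω) ^ 2] / 𝔼[X])) := by
  -- measurability of the relevant events
  have hA : ∀ η, MeasurableSet {ω | S η ω < X ω} :=
    fun η => measurableSet_lt (hSmeas η) hXmeas
  have hB : ∀ η, MeasurableSet {ω | X ω ≤ S η ω} :=
    fun η => measurableSet_le hXmeas (hSmeas η)
  have hT1 : ∀ η, MeasurableSet {ω | (1:ℝ) < S η ω} :=
    fun η => measurableSet_lt measurable_const (hSmeas η)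
  have hL1 : ∀ η, MeasurableSet {ω | S η ω ≤ (1:ℝ)} :=
    fun η => measurableSet_le (hSmeas η) measurable_const
  -- ℙ {X ≤ 0} = 0
  have hXlt0 : ℙ {ω | X ω < 0} = 0 := by
    have h := hXnn
    rw [ae_iff] at h
    simpa [not_le] using h
  have hXle0 : ℙ {ω | X ω ≤ 0} = 0 := by
    have hsub : {ω | X ω ≤ 0} ⊆ {ω | X ω < 0} ∪ {ω | X ω = 0} := by
      intro ω hω
      rcases lt_or_eq_of_le (show X ω ≤ 0 from hω) with h | h
      · exact Or.inl h
      · exact Or.inr h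
    refine le_antisymm ?_ zero_le
    calc ℙ {ω | X ω ≤ 0} ≤ ℙ ({ω | X ω < 0} ∪ {ω | X ω = 0}) := measure_mono hsub
      _ ≤ ℙ {ω | X ω < 0} + ℙ {ω | X ω = 0} := measure_union_le _ _
      _ = 0 := by rw [hXlt0, hX0, add_zero]
  -- for every ε > 0 there is x > 0 with ℙ{X ≤ x}.toReal < ε
  have hxexists : ∀ ε : ℝ, 0 < ε → ∃ x : ℝ, 0 < x ∧ (ℙ {ω | X ω ≤ x}).toReal < ε := by
    intro ε hε
    set A : ℕ → Set Ω := fun n => {ω | X ω ≤ 1 / (n + 1)} with hAdef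
    have hmeasA : ∀ n, NullMeasurableSet (A n) ℙ := fun n =>
      (measurableSet_le hXmeas measurable_const).nullMeasurableSet
    have hanti : Antitone A := by
      intro m n hmn ω hω
      simp only [hAdef, Set.mem_setOf_eq] at hω ⊢
      refine le_trans hω ?_
      apply one_div_le_one_div_of_le
      · positivity
      · have : (m:ℝ) ≤ n := Nat.cast_le.2 hmn
        linarith
    have hiInter : (⋂ n, A n) = {ω | X ω ≤ 0} := by
      ext ω
      simp only [Set.mem_iInter, Set.mem_setOf_eq, hAdef]
      constructor
      · intro h
        exact ge_of_tendsto' tendsto_one_div_add_atTop_nhds_zero_nat fun n => h n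
      · intro h n
        exact h.trans (by positivity)
    have htends : Tendsto (fun n => ℙ (A n)) atTop (𝓝 0) := by
      have h := tendsto_measure_iInter_atTop hmeasA hanti ⟨0, measure_ne_top _ _⟩
      rw [hiInter, hXle0] at h
      exact h
    have htoReal : Tendsto (fun n => (ℙ (A n)).toReal) atTop (𝓝 0) := by
      have h := (ENNReal.tendsto_toReal (by simp)).comp htends
      exact h
    obtain ⟨n, hn⟩ := (htoReal.eventually (gt_mem_nhds hε)).exists
    exact ⟨1 / (n + 1), by positivity, hn⟩
  -- P(X ≤ S η) → 0
  have hq : Tendsto (fun η => (ℙ {ω | X ω ≤ S η ω}).toReal) l (𝓝 0) := by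
    rw [NormedAddCommGroup.tendsto_nhds_zero]
    intro ε hε
    obtain ⟨x, hx, hxε⟩ := hxexists (ε / 2) (by linarith)
    have h2 := (htail x hx).eventually (gt_mem_nhds (show (0:ℝ) < ε / 2 by linarith))
    filter_upwards [h2] with η hη
    rw [Real.norm_eq_abs, abs_of_nonneg ENNReal.toReal_nonneg]
    have hsub : {ω | X ω ≤ S η ω} ⊆ {ω | x < S η ω} ∪ {ω | X ω ≤ x} := by
      intro ω hω
      by_cases h : x < S η ω
      · exact Or.inl h
      · exact Or.inr (le_trans hω (not_lt.1 h))
    calc (ℙ {ω | X ω ≤ S η ω}).toReal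
        ≤ ((ℙ {ω | x < S η ω}) + ℙ {ω | X ω ≤ x}).toReal := by
          apply ENNReal.toReal_mono
          · exact ENNReal.add_ne_top.2 ⟨measure_ne_top _ _, measure_ne_top _ _⟩
          · exact le_trans (measure_mono hsub) (measure_union_le _ _)
      _ = (ℙ {ω | x < S η ω}).toReal + (ℙ {ω | X ω ≤ x}).toReal :=
          ENNReal.toReal_add (measure_ne_top _ _) (measure_ne_top _ _)
      _ < ε / 2 + ε / 2 := add_lt_add hη hxε
      _ = ε := by ring
  -- (1) P(S η < X) → 1
  have h1 : Tendsto (fun η => (ℙ {ω | S η ω < X ω}).toReal) l (𝓝 1) := by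
    have heq : ∀ η, (ℙ {ω | S η ω < X ω}).toReal
        = 1 - (ℙ {ω | X ω ≤ S η ω}).toReal := by
      intro η
      have hc : {ω | S η ω < X ω} = {ω | X ω ≤ S η ω}ᶜ := by
        ext ω; simp [not_le]
      rw [hc, measure_compl (hB η) (measure_ne_top _ _), measure_univ,
        ENNReal.toReal_sub_of_le prob_le_one ENNReal.one_ne_top, ENNReal.toReal_one]
    simp only [heq]
    simpa using tendsto_const_nhds.sub hq
  -- independence: E[1_{1 < S η} · X] = E[X] · P(1 < S η)
  have hXind : ∀ η, ∫ ω, Set.indicator {ω' | 1 < S η ω'} X ω ∂ℙ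
      = 𝔼[X] * (ℙ {ω | 1 < S η ω}).toReal := by
    intro η
    set φ : ℝ → ℝ := Set.indicator (Set.Ioi (1:ℝ)) (fun _ => 1) with hφdef
    have hφm : Measurable φ := measurable_const.indicator measurableSet_Ioi
    have hφeq : (φ ∘ S η) = Set.indicator {ω | 1 < S η ω} (fun _ => (1:ℝ)) := by
      funext ω
      by_cases h : 1 < S η ω <;>
        simp [hφdef, Set.indicator_apply, Set.mem_Ioi, h]
    have hφint : Integrable (φ ∘ S η) ℙ := by
      rw [hφeq]; exact (integrable_const 1).indicator (hT1 η)
    have hind2 : IndepFun X (φ ∘ S η) ℙ := (hindep η).comp measurable_id hφm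
    have hmul := IndepFun.integral_fun_mul_eq_mul_integral hind2 hXint.aestronglyMeasurable hφint.aestronglyMeasurable
    have hφint2 : ∫ ω, (φ ∘ S η) ω ∂ℙ = (ℙ {ω | 1 < S η ω}).toReal := by
      rw [hφeq, integral_indicator_const (1:ℝ) (hT1 η)]
      simp [Measure.real]
    have hcomp : ∀ ω, X ω * (φ ∘ S η) ω = Set.indicator {ω' | 1 < S η ω'} X ω := by
      intro ω
      by_cases h : 1 < S η ω <;>
        simp [hφdef, Set.indicator_apply, Set.mem_Ioi, h]
    calc ∫ ω, Set.indicator {ω' | 1 < S η ω'} X ω ∂ℙ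
        = ∫ ω, X ω * (φ ∘ S η) ω ∂ℙ := by
          exact integral_congr_ae (Filter.Eventually.of_forall fun ω => (hcomp ω).symm)
      _ = (∫ ω, X ω ∂ℙ) * ∫ ω, (φ ∘ S η) ω ∂ℙ := hmul
      _ = 𝔼[X] * (ℙ {ω | 1 < S η ω}).toReal := by rw [hφint2]
  -- the dominating sequence tends to 0
  have hBint : ∀ η, Integrable (fun ω => Set.indicator {ω' | S η ω' ≤ 1} (S η) ω
      + Set.indicator {ω' | 1 < S η ω'} X ω) ℙ :=
    fun η => ((hSint η).indicator (hL1 η)).add (hXint.indicator (hT1 η))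
  have hBtends : Tendsto (fun η => ∫ ω, (Set.indicator {ω' | S η ω' ≤ 1} (S η) ω
      + Set.indicator {ω' | 1 < S η ω'} X ω) ∂ℙ) l (𝓝 0) := by
    have hsum : ∀ η, ∫ ω, (Set.indicator {ω' | S η ω' ≤ 1} (S η) ω
        + Set.indicator {ω' | 1 < S η ω'} X ω) ∂ℙ
        = (∫ ω, Set.indicator {ω' | S η ω' ≤ 1} (S η) ω ∂ℙ)
          + ∫ ω, Set.indicator {ω' | 1 < S η ω'} X ω ∂ℙ :=
      fun η => integral_add ((hSint η).indicator (hL1 η)) (hXint.indicator (hT1 η))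
    have e1 : Tendsto (fun η => ∫ ω, Set.indicator {ω' | S η ω' ≤ 1} (S η) ω ∂ℙ)
        l (𝓝 0) := by
      have h := htrunc 1 one_pos
      simpa only [mul_ind_eq] using h
    have e2 : Tendsto (fun η => ∫ ω, Set.indicator {ω' | 1 < S η ω'} X ω ∂ℙ)
        l (𝓝 0) := by
      simp only [hXind]
      simpa using (htail 1 one_pos).const_mul (𝔼[X])
    have h := e1.add e2
    simp only [← hsum] at h
    simpa using h
  -- (2) E[S η 1{S η < X}] → 0
  have h2 : Tendsto (fun η =>
      𝔼[fun ω => S η ω * Set.indicator {ω' | S η ω' < X ω'} (fun _ => (1:ℝ)) ω])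
      l (𝓝 0) := by
    simp only [mul_ind_eq]
    apply squeeze_zero (t₀ := l)
    · intro η
      apply integral_nonneg_of_ae
      filter_upwards [hSnn η] with ω hS
      exact Set.indicator_apply_nonneg fun _ => hS
    · intro η
      apply integral_mono_ae ((hSint η).indicator (hA η)) (hBint η)
      filter_upwards [hSnn η, hXnn] with ω hS hX
      simp only [Set.indicator_apply, Set.mem_setOf_eq]
      split_ifs <;> linarith
    · exact hBtends
  -- (3) E[min(X, S η)] → 0
  have h3 : Tendsto (fun η => 𝔼[fun ω => min (X ω) (S η ω)]) l (𝓝 0) := by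
    apply squeeze_zero (t₀ := l)
    · intro η
      apply integral_nonneg_of_ae
      filter_upwards [hSnn η, hXnn] with ω hS hX
      exact le_min hX hS
    · intro η
      have hmin_int : Integrable (fun ω => min (X ω) (S η ω)) ℙ := by
        apply Integrable.mono' (hXint.add (hSint η))
          ((hXmeas.min (hSmeas η)).aestronglyMeasurable)
        filter_upwards [hSnn η, hXnn] with ω hS hX
        have hle := min_le_left (X ω) (S η ω)
        have h0 := le_min hX hS
        simp only [Pi.add_apply, Real.norm_eq_abs, abs_le]
        constructor <;> linarith
      apply integral_mono_ae hmin_int (hBint η)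
      filter_upwards [hSnn η, hXnn] with ω hS hX
      have hm1 := min_le_left (X ω) (S η ω)
      have hm2 := min_le_right (X ω) (S η ω)
      simp only [Set.indicator_apply, Set.mem_setOf_eq]
      split_ifs <;> linarith
    · exact hBtends
  -- (4) peak age
  have h4 : Tendsto (fun η =>
      𝔼[X] / (ℙ {ω | S η ω < X ω}).toReal +
        𝔼[fun ω => S η ω * Set.indicator {ω' | S η ω' < X ω'} (fun _ => (1:ℝ)) ω] /
          (ℙ {ω | S η ω < X ω}).toReal) l (𝓝 (𝔼[X])) := by
    have h := (Tendsto.div (tendsto_const_nhds (x := 𝔼[X])) h1 one_ne_zero).add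
      (h2.div h1 one_ne_zero)
    simpa using h
  -- (5) average age
  have h5 : Tendsto (fun η =>
      (1 / 2) * 𝔼[fun ω => (X ω) ^ 2] / 𝔼[X] +
        𝔼[fun ω => min (X ω) (S η ω)] / (ℙ {ω | S η ω < X ω}).toReal) l
      (𝓝 ((1 / 2) * 𝔼[fun ω => (X ω) ^ 2] / 𝔼[X])) := by
    have h := (tendsto_const_nhds (x := (1 / 2) * 𝔼[fun ω => (X ω) ^ 2] / 𝔼[X])).add
      (h3.div h1 one_ne_zero)
    simpa using h
  exact ⟨h1, h2, h3, h4, h5⟩
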